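/- Let k ≥ 1, let B be a group, θ : B → ℤ/2 a group homomorphism, σ ∈ B with θ(σ) = 1, and λ₁, …, λ_k ∈ B with θ(λ_i) = 0 for all i. Set ρ = σ² and λ'_i = σ·λ_i·σ⁻¹, all of which lie in P = ker θ. Let F_k be the free group on generators z₁, …, z_k and suppose p₁ : P → F_k is a group homomorphism satisfying p₁(ρ) = z₁, p₁(λ_i) = 1 for all i, p₁(λ'₁) = z₁, and p₁(λ'_i) = z_i·z₁⁻¹ for i = 2, …, k. Then for every choice of elements w, w₁, w'₁, …, w_m, w'_m of F_k there exists a group homomorphism ψ from the free group on generators c, c₁, …, c_m to B such that θ(ψ(c)) = 1, θ(ψ(c_i)) = 0 for all i, and ψ(c²), ψ(c_i), ψ(c·c_i·c⁻¹) all lie in P with p₁(ψ(c²)) = w, p₁(ψ(c_i)) = w_i, and p₁(ψ(c·c_i·c⁻¹)) = w'_i. -/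
import Mathlib


/-- **Computational core of Theorem 1, linear-tree case.**
Let `k ≥ 1`, `θ : B → ℤ/2`, `σ ∈ B` with `θ σ = 1`, and `λ₁, …, λ_k ∈ P = ker θ`.
Set `ρ = σ²` and `λ'ᵢ = σ·λᵢ·σ⁻¹` (both in `P`).  Suppose `p₁ : P → F_k` is a homomorphism
to the free group on `z₁, …, z_k` with `p₁ ρ = z₁`, `p₁ λᵢ = 1` for all `i`,
`p₁ λ'₁ = z₁`, and `p₁ λ'ᵢ = zᵢ·z₁⁻¹` for `i ≥ 2`.  Then for all words
`w, wᵢ, w'ᵢ ∈ F_k` there is a homomorphism `ψ` from the free group on `c, c₁, …, c_m`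
(generators indexed by `Option (Fin m)`, with `c` indexed by `none`) to `B` such that
`θ (ψ c) = 1`, `θ (ψ cᵢ) = 0`, the elements `ψ (c²)`, `ψ cᵢ`, `ψ (c·cᵢ·c⁻¹)` lie in `P`,
and their `p₁`-images are `w`, `wᵢ`, `w'ᵢ` respectively. -/
theorem braid_lifting_linear_tree_case (k m : ℕ) (hk : 1 ≤ k) {B : Type*} [Group B]
    (θ : B →* Multiplicative (ZMod 2))
    (σ : B) (hσ : θ σ = Multiplicative.ofAdd 1)
    (lam : Fin k → B) (hlam_mem : ∀ i, lam i ∈ θ.ker)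
    (hρ_mem : σ ^ 2 ∈ θ.ker)
    (hlam'_mem : ∀ i, σ * lam i * σ⁻¹ ∈ θ.ker)
    (p₁ : θ.ker →* FreeGroup (Fin k))
    (hρ : p₁ ⟨σ ^ 2, hρ_mem⟩ = FreeGroup.of ⟨0, hk⟩)
    (hlam : ∀ i, p₁ ⟨lam i, hlam_mem i⟩ = 1)
    (hlam'₁ : p₁ ⟨σ * lam ⟨0, hk⟩ * σ⁻¹, hlam'_mem ⟨0, hk⟩⟩ = FreeGroup.of ⟨0, hk⟩)
    (hlam' : ∀ i, i ≠ (⟨0, hk⟩ : Fin k) →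
      p₁ ⟨σ * lam i * σ⁻¹, hlam'_mem i⟩ =
        FreeGroup.of i * (FreeGroup.of (⟨0, hk⟩ : Fin k))⁻¹)
    (w : FreeGroup (Fin k)) (wi wi' : Fin m → FreeGroup (Fin k)) :
    ∃ ψ : FreeGroup (Option (Fin m)) →* B,
      θ (ψ (FreeGroup.of none)) = Multiplicative.ofAdd 1 ∧
      (∀ i : Fin m, θ (ψ (FreeGroup.of (some i))) = 1) ∧
      (∃ h : ψ (FreeGroup.of none ^ 2) ∈ θ.ker,
        p₁ ⟨ψ (FreeGroup.of none ^ 2), h⟩ = w) ∧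
      (∀ i : Fin m, ∃ h : ψ (FreeGroup.of (some i)) ∈ θ.ker,
        p₁ ⟨ψ (FreeGroup.of (some i)), h⟩ = wi i) ∧
      (∀ i : Fin m, ∃ h : ψ (FreeGroup.of none * FreeGroup.of (some i) *
          (FreeGroup.of (none : Option (Fin m)))⁻¹) ∈ θ.ker,
        p₁ ⟨ψ (FreeGroup.of none * FreeGroup.of (some i) *
          (FreeGroup.of (none : Option (Fin m)))⁻¹), h⟩ = wi' i) := by
  classical
  set o : Fin k := ⟨0, hk⟩ with ho
  -- change of basis on the free group
  set T : FreeGroup (Fin k) →* FreeGroup (Fin k) :=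
    FreeGroup.lift (fun i => if i = o then FreeGroup.of o
      else FreeGroup.of i * (FreeGroup.of o)⁻¹) with hTdef
  set S : FreeGroup (Fin k) →* FreeGroup (Fin k) :=
    FreeGroup.lift (fun i => if i = o then FreeGroup.of o
      else FreeGroup.of i * FreeGroup.of o) with hSdef
  have hTS : ∀ u, T (S u) = u := by
    have : T.comp S = MonoidHom.id _ := by
      apply FreeGroup.ext_hom
      intro i
      by_cases hi : i = o <;> simp [hSdef, hTdef, hi]
    intro u
    have := congrArg (fun f => f u) this
    simpa using this
  have hTo : T (FreeGroup.of o) = FreeGroup.of o := by simp [hTdef]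
  -- the three substitution homomorphisms
  set Λ : FreeGroup (Fin k) →* B := FreeGroup.lift lam with hΛdef
  set Λh : FreeGroup (Fin k) →* θ.ker :=
    FreeGroup.lift (fun i => (⟨lam i, hlam_mem i⟩ : θ.ker)) with hΛhdef
  set Λ' : FreeGroup (Fin k) →* θ.ker :=
    FreeGroup.lift (fun i => (⟨σ * lam i * σ⁻¹, hlam'_mem i⟩ : θ.ker)) with hΛ'def
  have hΛh : ∀ u, ((Λh u : θ.ker) : B) = Λ u := by
    have : θ.ker.subtype.comp Λh = Λ := by
      apply FreeGroup.ext_hom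
      intro i
      simp [hΛhdef, hΛdef]
    intro u
    have := congrArg (fun f => f u) this
    simpa using this
  have hΛ' : ∀ u, ((Λ' u : θ.ker) : B) = σ * Λ u * σ⁻¹ := by
    have : θ.ker.subtype.comp Λ' = ((MulAut.conj σ).toMonoidHom).comp Λ := by
      apply FreeGroup.ext_hom
      intro i
      simp [hΛ'def, hΛdef, MulAut.conj, mul_assoc]
    intro u
    have := congrArg (fun f => f u) this
    simpa [MulAut.conj, mul_assoc] using this
  have hθΛ : ∀ u, θ (Λ u) = 1 := by
    have : θ.comp Λ = 1 := by
      apply FreeGroup.ext_hom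
      intro i
      simpa [hΛdef] using (MonoidHom.mem_ker).1 (hlam_mem i)
    intro u
    have := congrArg (fun f => f u) this
    simpa using this
  have hp₁Λh : ∀ u, p₁ (Λh u) = 1 := by
    have : p₁.comp Λh = 1 := by
      apply FreeGroup.ext_hom
      intro i
      simpa [hΛhdef] using hlam i
    intro u
    have := congrArg (fun f => f u) this
    simpa using this
  have hp₁Λ' : ∀ u, p₁ (Λ' u) = T u := by
    have : p₁.comp Λ' = T := by
      apply FreeGroup.ext_hom
      intro i
      by_cases hi : i = o
      · subst hi
        simpa [hΛ'def, hTdef] using hlam'₁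
      · simpa [hΛ'def, hTdef, hi] using hlam' i hi
    intro u
    have := congrArg (fun f => f u) this
    simpa using this
  -- the words in the new basis
  set L : FreeGroup (Fin k) := S (w * (FreeGroup.of o)⁻¹) with hL
  set Li : Fin m → FreeGroup (Fin k) := fun i => S (wi i * (FreeGroup.of o)⁻¹) with hLi
  set Li' : Fin m → FreeGroup (Fin k) := fun i => S (wi' i * (FreeGroup.of o)⁻¹) with hLi'
  -- the lift ψ
  set ψ : FreeGroup (Option (Fin m)) →* B :=
    FreeGroup.lift (fun x => Option.rec (Λ L * σ)
      (fun i => σ * Λ (Li i) * σ * (lam o)⁻¹ * Λ (Li' i) * lam o) x) with hψdef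
  have hψn : ψ (FreeGroup.of none) = Λ L * σ := by simp [hψdef]
  have hψs : ∀ i, ψ (FreeGroup.of (some i)) =
      σ * Λ (Li i) * σ * (lam o)⁻¹ * Λ (Li' i) * lam o := by
    intro i; simp [hψdef]
  have hΛo : Λ (FreeGroup.of o) = lam o := FreeGroup.lift_apply_of
  have hρcoe : ((⟨σ ^ 2, hρ_mem⟩ : θ.ker) : B) = σ ^ 2 := rfl
  have hθlamo : θ (lam o) = 1 := (MonoidHom.mem_ker).1 (hlam_mem o)
  have h11 : (Multiplicative.ofAdd (1 : ZMod 2)) * Multiplicative.ofAdd (1 : ZMod 2) = 1 := by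
    decide
  refine ⟨ψ, ?_, ?_, ?_, ?_, ?_⟩
  · rw [hψn, map_mul, hθΛ, hσ, one_mul]
  · intro i
    rw [hψs i]
    simp only [map_mul, map_inv, hθΛ, hσ, hθlamo, mul_one, one_mul, inv_one]
    decide
  · -- ψ(c²)
    have hmem : ψ (FreeGroup.of none ^ 2) ∈ θ.ker := by
      rw [MonoidHom.mem_ker, map_pow, map_pow, hψn, map_mul, hθΛ, hσ, one_mul]
      simpa [pow_two] using h11
    refine ⟨hmem, ?_⟩
    have key : (⟨ψ (FreeGroup.of none ^ 2), hmem⟩ : θ.ker) =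
        Λh L * Λ' L * ⟨σ ^ 2, hρ_mem⟩ := by
      ext
      show ψ (FreeGroup.of none ^ 2) = _
      simp only [Subgroup.coe_mul, hΛh, hΛ', hρcoe]
      rw [map_pow, hψn, pow_two]
      group
    rw [key, map_mul, map_mul, hp₁Λh, hp₁Λ', hρ, one_mul, hL, hTS]
    group
  · -- ψ(cᵢ)
    intro i
    have hmem : ψ (FreeGroup.of (some i)) ∈ θ.ker := by
      rw [MonoidHom.mem_ker, hψs i]
      simp only [map_mul, map_inv, hθΛ, hσ, hθlamo, mul_one, one_mul, inv_one]
      exact h11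
    refine ⟨hmem, ?_⟩
    have key : (⟨ψ (FreeGroup.of (some i)), hmem⟩ : θ.ker) =
        Λ' (Li i) * ⟨σ ^ 2, hρ_mem⟩ *
          Λh ((FreeGroup.of o)⁻¹ * Li' i * FreeGroup.of o) := by
      ext
      show ψ (FreeGroup.of (some i)) = _
      simp only [Subgroup.coe_mul, hΛh, hΛ', hρcoe]
      rw [hψs i, map_mul, map_mul, map_inv, hΛo, pow_two]
      group
    rw [key, map_mul, map_mul, hp₁Λh, hp₁Λ', hρ, mul_one, hLi, hTS]
    group
  · -- ψ(c·cᵢ·c⁻¹)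
    intro i
    have hmem : ψ (FreeGroup.of none * FreeGroup.of (some i) *
        (FreeGroup.of (none : Option (Fin m)))⁻¹) ∈ θ.ker := by
      rw [MonoidHom.mem_ker]
      simp only [map_mul, map_inv, hψn, hψs i, hθΛ, hσ, hθlamo, mul_one, one_mul,
        inv_one, mul_inv_rev]
      decide
    refine ⟨hmem, ?_⟩
    have key : (⟨ψ (FreeGroup.of none * FreeGroup.of (some i) *
        (FreeGroup.of (none : Option (Fin m)))⁻¹), hmem⟩ : θ.ker) =
        Λh L * ⟨σ ^ 2, hρ_mem⟩ * Λh (Li i) *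
          Λ' ((FreeGroup.of o)⁻¹ * Li' i * FreeGroup.of o) * (Λh L)⁻¹ := by
      ext
      show ψ (FreeGroup.of none * FreeGroup.of (some i) *
        (FreeGroup.of (none : Option (Fin m)))⁻¹) = _
      simp only [Subgroup.coe_mul, InvMemClass.coe_inv, hΛh, hΛ', hρcoe]
      rw [map_mul, map_mul, map_inv, hψn, hψs i]
      rw [map_mul, map_mul, map_inv, hΛo, pow_two]
      group
    rw [key, map_mul, map_mul, map_mul, map_mul, map_inv, hp₁Λh, hp₁Λh, hp₁Λ',
      hρ, hLi']
    rw [map_mul, map_mul, map_inv, hTo, hTS]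
    group
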